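/- Let (E, 𝓔) be a measurable space with a σ-finite measure m. Let π : E → ℝ be a measurable function with π(x) > 0 for all x and ∫ π dm = 1, let κ̃ : E → ℝ be measurable, and fix κ̲ ≥ 0. Suppose C* := ∫ max(0, κ̲ − κ̃(x)) π(x) dm(x) is finite and strictly positive, and define the minimal regeneration density μ*(x) := (C*)^{−1} max(0, κ̲ − κ̃(x)) π(x). Let μ : E → ℝ be a nonnegative measurable function with ∫ μ dm = 1 and let C > 0 be a constant such that κ̃(x) + C·μ(x)/π(x) ≥ κ̲ for all x ∈ E. Then: (a) C·μ(x) ≥ C*·μ*(x) for every x ∈ E; (b) for every measurable set B ⊆ E, ∫_B μ dm ≥ (C*/C) ∫_B μ* dm, so μ minorizes μ* with constant ε = C*/C; and (c) C ≥ C*. -/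

import Mathlib

open MeasureTheory

/-- **Minimal regeneration distribution (Proposition 5.1).**
Given a positive target density `π` (w.r.t. a σ-finite measure `m`), a partial regeneration
rate `κ̃`, and a lower bound `κ̲ ≥ 0`, let `C* = ∫ max 0 (κ̲ - κ̃) π dm ∈ (0,∞)` and
`μ*(x) = (C*)⁻¹ max 0 (κ̲ - κ̃ x) π x`.  If `μ ≥ 0` is a normalized density and `C > 0` is
such that `κ̃ x + C μ x / π x ≥ κ̲` for all `x`, then `C μ ≥ C* μ*` pointwise, `μ` minorizes
`μ*` with constant `ε = C*/C` in the sense that `∫_B μ ≥ (C*/C) ∫_B μ*` for all measurable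
`B`, and `C ≥ C*`. -/
theorem minimal_regeneration_distribution
    {E : Type*} [MeasurableSpace E] (m : Measure E) [SigmaFinite m]
    (π κt μ : E → ℝ)
    (hπmeas : Measurable π) (hκtmeas : Measurable κt) (hμmeas : Measurable μ)
    (hπpos : ∀ x, 0 < π x) (hπint : ∫ x, π x ∂m = 1)
    (κlow : ℝ) (hκlow : 0 ≤ κlow)
    (Cstar : ℝ) (hCstar : Cstar = ∫ x, max 0 (κlow - κt x) * π x ∂m)
    (hCstarInt : Integrable (fun x => max 0 (κlow - κt x) * π x) m)
    (hCstarpos : 0 < Cstar)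
    (μstar : E → ℝ) (hμstar : ∀ x, μstar x = Cstar⁻¹ * (max 0 (κlow - κt x) * π x))
    (hμnonneg : ∀ x, 0 ≤ μ x) (hμint : ∫ x, μ x ∂m = 1)
    (hμIntegrable : Integrable μ m)
    (C : ℝ) (hC : 0 < C)
    (hκ : ∀ x, κlow ≤ κt x + C * μ x / π x) :
    (∀ x, Cstar * μstar x ≤ C * μ x) ∧
    (∀ B : Set E, MeasurableSet B →
      (Cstar / C) * ∫ x in B, μstar x ∂m ≤ ∫ x in B, μ x ∂m) ∧
    Cstar ≤ C := by
  have hpt : ∀ x, max 0 (κlow - κt x) * π x ≤ C * μ x := by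
    intro x
    have hπx := hπpos x
    rcases le_total (κlow - κt x) 0 with h | h
    · rw [max_eq_left h]
      simpa using mul_nonneg hC.le (hμnonneg x)
    · rw [max_eq_right h]
      have h1 : κlow - κt x ≤ C * μ x / π x := by linarith [hκ x]
      calc (κlow - κt x) * π x ≤ (C * μ x / π x) * π x :=
            mul_le_mul_of_nonneg_right h1 hπx.le
        _ = C * μ x := by field_simp
  have hCsμ : ∀ x, Cstar * μstar x = max 0 (κlow - κt x) * π x := by
    intro x
    rw [hμstar x]
    field_simp
  refine ⟨fun x => (hCsμ x).le.trans (hpt x), ?_, ?_⟩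
  · intro B hB
    have hμsB : ∫ x in B, μstar x ∂m
        = Cstar⁻¹ * ∫ x in B, max 0 (κlow - κt x) * π x ∂m := by
      rw [← integral_const_mul]
      exact setIntegral_congr_fun hB (fun x _ => hμstar x)
    rw [hμsB]
    have hle : ∫ x in B, max 0 (κlow - κt x) * π x ∂m ≤ ∫ x in B, C * μ x ∂m :=
      setIntegral_mono_on (hCstarInt.restrict) ((hμIntegrable.const_mul C).restrict) hB
        (fun x _ => hpt x)
    rw [integral_const_mul] at hle
    have : (Cstar / C) * (Cstar⁻¹ * ∫ x in B, max 0 (κlow - κt x) * π x ∂m)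
        = C⁻¹ * ∫ x in B, max 0 (κlow - κt x) * π x ∂m := by
      field_simp
    rw [this]
    calc C⁻¹ * ∫ x in B, max 0 (κlow - κt x) * π x ∂m
        ≤ C⁻¹ * (C * ∫ x in B, μ x ∂m) :=
          mul_le_mul_of_nonneg_left hle (inv_nonneg.mpr hC.le)
      _ = ∫ x in B, μ x ∂m := by field_simp
  · have : Cstar ≤ ∫ x, C * μ x ∂m := by
      rw [hCstar]
      exact integral_mono hCstarInt (hμIntegrable.const_mul C) hpt
    rwa [integral_const_mul, hμint, mul_one] at this
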